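/- Let σ(z) = 1/(1+e^{-z}) be the sigmoid function. For all real a and b, |σ(a) - σ(b)| ≥ e^{-|a|-3} · min(1, |a - b|). -/

import Mathlib

open Real

lemma chord (t : ℝ) (h0 : 0 ≤ t) (h1 : t ≤ 1) :
    (1 - Real.exp (-1)) * t ≤ 1 - Real.exp (-t) := by
  have h := convexOn_exp.2 (Set.mem_univ (-1:ℝ)) (Set.mem_univ (0:ℝ)) h0
    (by linarith : (0:ℝ) ≤ 1 - t) (by ring : t + (1 - t) = 1)
  simp only [smul_eq_mul, mul_neg, mul_one, mul_zero, add_zero, Real.exp_zero] at h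
  have : t * (-1) + (1-t) * 0 = -t := by ring
  calc (1 - Real.exp (-1)) * t = 1 - (t * Real.exp (-1) + (1 - t) * 1) := by ring
    _ ≤ 1 - Real.exp (-t) := by
        have h' : Real.exp (-t) ≤ t * Real.exp (-1) + (1 - t) * 1 := by
          have := h
          linarith
        linarith

lemma sig_mono (u v : ℝ) (h : u ≤ v) :
    1/(1+Real.exp (-u)) ≤ 1/(1+Real.exp (-v)) := by
  apply one_div_le_one_div_of_le (by positivity)
  have := Real.exp_le_exp.2 (neg_le_neg h)
  linarith

lemma exp_const_ineq : Real.exp (-2 : ℝ) ≤ (1 - Real.exp (-1)) / 4 := by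
  have he : Real.exp 1 > 2.7182818283 := Real.exp_one_gt_d9
  have hep : (0:ℝ) < Real.exp 1 := Real.exp_pos 1
  have hq : (0:ℝ) < Real.exp (-2:ℝ) := Real.exp_pos _
  have h1 : Real.exp (-1:ℝ) * Real.exp 1 = 1 := by rw [← Real.exp_add]; norm_num
  have h2 : Real.exp (-2:ℝ) * (Real.exp 1 * Real.exp 1) = 1 := by
    rw [← mul_assoc, ← Real.exp_add, ← Real.exp_add]; norm_num
  have h1' : Real.exp (-2:ℝ) * Real.exp 1 = Real.exp (-1:ℝ) := by
    rw [← Real.exp_add]; norm_num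
  have key : 4 ≤ Real.exp 1 * Real.exp 1 - Real.exp 1 := by nlinarith
  have heq : (1 - Real.exp (-1:ℝ)) - 4 * Real.exp (-2:ℝ)
      = Real.exp (-2:ℝ) * (Real.exp 1 * Real.exp 1 - Real.exp 1 - 4) := by
    linear_combination - h2 + h1'
  nlinarith [mul_nonneg hq.le (by linarith : (0:ℝ) ≤ Real.exp 1 * Real.exp 1 - Real.exp 1 - 4)]

lemma sig_lb (u v : ℝ) (h1 : u ≤ v) (h2 : v ≤ u + 1) :
    Real.exp (-|u| - 2) * (v - u) ≤ 1/(1+Real.exp (-v)) - 1/(1+Real.exp (-u)) := by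
  have hx : (0:ℝ) < Real.exp (-u) := Real.exp_pos _
  have hy : (0:ℝ) < Real.exp (-v) := Real.exp_pos _
  set x := Real.exp (-u) with hxdef
  set y := Real.exp (-v) with hydef
  have hyx : y ≤ x := Real.exp_le_exp.2 (by linarith)
  have hx1p : (0:ℝ) < 1 + x := by linarith
  have hy1p : (0:ℝ) < 1 + y := by linarith
  have hdiff : 1/(1+y) - 1/(1+x) = (x - y)/((1+x)*(1+y)) := by
    rw [div_sub_div _ _ hy1p.ne' hx1p.ne']
    rw [mul_comm (1+y) (1+x)]
    congr 1
    ring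
  have hyx2 : y = x * Real.exp (u - v) := by
    rw [hxdef, hydef, ← Real.exp_add]
    ring_nf
  have hch : (1 - Real.exp (-1)) * (v - u) ≤ 1 - Real.exp (u - v) := by
    have := chord (v - u) (by linarith) (by linarith)
    rwa [show -(v-u) = u - v by ring] at this
  have hnum : x * ((1 - Real.exp (-1)) * (v - u)) ≤ x - y := by
    rw [hyx2]
    calc x * ((1 - Real.exp (-1)) * (v - u)) ≤ x * (1 - Real.exp (u - v)) :=
          mul_le_mul_of_nonneg_left hch hx.le
      _ = x - x * Real.exp (u - v) := by ring
  have hkey : Real.exp (-|u|) / 4 ≤ x / ((1+x)*(1+x)) := by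
    rcases le_or_gt 0 u with hu | hu
    · have habs : Real.exp (-|u|) = x := by rw [abs_of_nonneg hu]
      rw [habs, div_le_div_iff₀ (by norm_num) (by positivity)]
      have hx1 : x ≤ 1 := by
        rw [hxdef, ← Real.exp_zero]
        exact Real.exp_le_exp.2 (by linarith)
      nlinarith [mul_nonneg (mul_nonneg hx.le (by linarith : (0:ℝ) ≤ 1 - x))
        (by linarith : (0:ℝ) ≤ 3 + x)]
    · have habs : Real.exp (-|u|) = 1 / x := by
        rw [abs_of_neg hu, neg_neg, hxdef, one_div, ← Real.exp_neg, neg_neg]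
      have hx1 : 1 ≤ x := by
        rw [hxdef, ← Real.exp_zero]
        exact Real.exp_le_exp.2 (by linarith)
      rw [habs, div_div, div_le_div_iff₀ (by positivity) (by positivity)]
      nlinarith [mul_nonneg (by linarith : (0:ℝ) ≤ x - 1) (by linarith : (0:ℝ) ≤ 3*x + 1)]
  have hp1 : Real.exp (-1:ℝ) ≤ 1 := by
    rw [← Real.exp_zero]; exact Real.exp_le_exp.2 (by norm_num)
  have hvu : (0:ℝ) ≤ v - u := by linarith
  have hden : (1+x)*(1+y) ≤ (1+x)*(1+x) := by nlinarith
  have hnum2 : 0 ≤ x - y := by linarith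
  have hfac : (0:ℝ) ≤ (1 - Real.exp (-1)) * (v - u) := mul_nonneg (by linarith) hvu
  rw [hdiff]
  calc Real.exp (-|u| - 2) * (v - u)
      = Real.exp (-|u|) * Real.exp (-2:ℝ) * (v - u) := by rw [← Real.exp_add]; ring_nf
    _ ≤ Real.exp (-|u|) * ((1 - Real.exp (-1)) / 4) * (v - u) := by
        apply mul_le_mul_of_nonneg_right _ hvu
        exact mul_le_mul_of_nonneg_left exp_const_ineq (Real.exp_pos _).le
    _ = Real.exp (-|u|) / 4 * ((1 - Real.exp (-1)) * (v - u)) := by ring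
    _ ≤ x / ((1+x)*(1+x)) * ((1 - Real.exp (-1)) * (v - u)) :=
        mul_le_mul_of_nonneg_right hkey hfac
    _ = x * ((1 - Real.exp (-1)) * (v - u)) / ((1+x)*(1+x)) := by ring
    _ ≤ (x - y) / ((1+x)*(1+y)) := by
        apply div_le_div₀ hnum2 hnum (by positivity) hden

theorem stmt_2 (a b : ℝ) :
    |1 / (1 + Real.exp (-a)) - 1 / (1 + Real.exp (-b))| ≥
      Real.exp (-|a| - 3) * min 1 |a - b| := by
  have hE : ∀ s t : ℝ, s ≤ t → Real.exp (-s - 3) ≤ Real.exp (-t + (- 2)) →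
      True := fun _ _ _ _ => trivial
  rcases le_total a b with hab | hab
  · -- a ≤ b, σ a ≤ σ b
    have hm := sig_mono a b hab
    rw [abs_sub_comm, abs_of_nonneg (by linarith)]
    rcases le_total (b - a) 1 with ht | ht
    · have hmin : min 1 |a - b| = b - a := by
        rw [abs_sub_comm, abs_of_nonneg (by linarith)]
        exact min_eq_right ht
      rw [hmin]
      have := sig_lb a b hab (by linarith)
      have hee : Real.exp (-|a| - 3) ≤ Real.exp (-|a| - 2) :=
        Real.exp_le_exp.2 (by linarith)
      calc Real.exp (-|a| - 3) * (b - a) ≤ Real.exp (-|a| - 2) * (b - a) :=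
            mul_le_mul_of_nonneg_right hee (by linarith)
        _ ≤ _ := this
    · have hmin : min 1 |a - b| = 1 := by
        apply min_eq_left
        rw [abs_sub_comm, abs_of_nonneg (by linarith)]; linarith
      rw [hmin, mul_one]
      have hstep := sig_lb a (a+1) (by linarith) (by linarith)
      have hmono := sig_mono (a+1) b (by linarith)
      have hee : Real.exp (-|a| - 3) ≤ Real.exp (-|a| - 2) :=
        Real.exp_le_exp.2 (by linarith)
      calc Real.exp (-|a| - 3) ≤ Real.exp (-|a| - 2) := hee
        _ = Real.exp (-|a| - 2) * (a + 1 - a) := by ring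
        _ ≤ 1/(1+Real.exp (-(a+1))) - 1/(1+Real.exp (-a)) := hstep
        _ ≤ 1/(1+Real.exp (-b)) - 1/(1+Real.exp (-a)) := by linarith
  · -- b ≤ a, σ b ≤ σ a
    have hm := sig_mono b a hab
    rw [abs_of_nonneg (by linarith)]
    rcases le_total (a - b) 1 with ht | ht
    · have hmin : min 1 |a - b| = a - b := by
        rw [abs_of_nonneg (by linarith)]
        exact min_eq_right ht
      rw [hmin]
      have hbl := sig_lb b a hab (by linarith)
      have habsb : |b| ≤ |a| + 1 := by
        calc |b| = |a + (b - a)| := by ring_nf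
          _ ≤ |a| + |b - a| := abs_add_le _ _
          _ ≤ |a| + 1 := by
              have : |b - a| = a - b ∨ |b - a| = -(a-b) := by
                rcases abs_cases (b-a) with ⟨h,_⟩|⟨h,_⟩ <;> [right; left] <;> linarith
              rcases this with h|h <;> linarith
      have hee : Real.exp (-|a| - 3) ≤ Real.exp (-|b| - 2) :=
        Real.exp_le_exp.2 (by linarith)
      calc Real.exp (-|a| - 3) * (a - b) ≤ Real.exp (-|b| - 2) * (a - b) :=
            mul_le_mul_of_nonneg_right hee (by linarith)
        _ ≤ _ := hbl
    · have hmin : min 1 |a - b| = 1 := by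
        apply min_eq_left
        rw [abs_of_nonneg (by linarith)]; linarith
      rw [hmin, mul_one]
      have hstep := sig_lb (a-1) a (by linarith) (by linarith)
      have hmono := sig_mono b (a-1) (by linarith)
      have habsb : |a-1| ≤ |a| + 1 := by
        calc |a-1| ≤ |a| + |(-1 : ℝ)| := abs_add_le a (-1) |>.trans_eq' (by ring_nf)
          _ = |a| + 1 := by norm_num
      have hee : Real.exp (-|a| - 3) ≤ Real.exp (-|a-1| - 2) :=
        Real.exp_le_exp.2 (by linarith)
      calc Real.exp (-|a| - 3) ≤ Real.exp (-|a-1| - 2) := hee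
        _ = Real.exp (-|a-1| - 2) * (a - (a-1)) := by ring
        _ ≤ 1/(1+Real.exp (-a)) - 1/(1+Real.exp (-(a-1))) := hstep
        _ ≤ 1/(1+Real.exp (-a)) - 1/(1+Real.exp (-b)) := by linarith
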